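/- The set of LS-paths of degree 1 over (S, ≤, b) is finite, and the discrete LS algebra A is generated as a ℂ-algebra by the finitely many monomials x^π with π an LS-path of degree 1; in particular A is a finitely generated ℂ-algebra. -/

import Mathlib

open Finset MvPolynomial

/-- `Mf b i` is `M_i = lcm(b_{i-1}, b_i)`, with the convention `b_{-1} = 1`
(the convention `b_N = 1` is imposed as a hypothesis in the statements). -/
def Mf (b : ℕ → ℕ) (i : ℕ) : ℕ := Nat.lcm (if i = 0 then 1 else b (i - 1)) (b i)

/-- An LS-path of degree `r` over the totally ordered set `{0, …, N}` with bonds `b`: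
a function `π : {0,…,N} → ℚ` (modelled as `π : ℕ → ℚ` vanishing above `N`) with
nonnegative values, integrality `b_j·(π 0 + ⋯ + π j) ∈ ℤ` for all `0 ≤ j ≤ N-1`,
and total sum `π 0 + ⋯ + π N = r`. -/
def IsLSPath (N : ℕ) (b : ℕ → ℕ) (r : ℕ) (π : ℕ → ℚ) : Prop :=
  (∀ i, 0 ≤ π i) ∧ (∀ i, N < i → π i = 0) ∧
  (∀ j < N, ∃ k : ℤ, (b j : ℚ) * (∑ i ∈ Finset.range (j + 1), π i) = k) ∧
  (∑ i ∈ Finset.range (N + 1), π i = r)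

/-- `SuppLE π π'` says `max supp π ≤ min supp π'`:
every element of the support of `π` is `≤` every element of the support of `π'`. -/
def SuppLE (π π' : ℕ → ℚ) : Prop := ∀ i j, π i ≠ 0 → π' j ≠ 0 → i ≤ j

/-- The monomial `x^π = ∏_{i=0}^{N} x_i ^ (M_i · π i)` in `ℂ[x_0,…,x_N]`
(the exponents `M_i · π i` are nonnegative integers for an LS-path `π`). -/
noncomputable def xpow (N : ℕ) (b : ℕ → ℕ) (π : ℕ → ℚ) :
    MvPolynomial (Fin (N + 1)) ℂ :=
  MvPolynomial.monomial
    (Finsupp.equivFunOnFinite.symm fun i : Fin (N + 1) => ⌊(Mf b i : ℚ) * π i⌋₊) (1 : ℂ)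

/-- The discrete LS algebra over `(S, ≤, b)`: the `ℂ`-linear span in `ℂ[x_0,…,x_N]`
of the monomials `x^π`, with `π` ranging over all LS-paths of all degrees. -/
noncomputable def discreteLS (N : ℕ) (b : ℕ → ℕ) :
    Submodule ℂ (MvPolynomial (Fin (N + 1)) ℂ) :=
  Submodule.span ℂ {p | ∃ r π, IsLSPath N b r π ∧ p = xpow N b π}

/-- The degree-`r` graded component `A_r = span_ℂ {x^π : π an LS-path of degree r}`. -/
noncomputable def discreteLSdeg (N : ℕ) (b : ℕ → ℕ) (r : ℕ) :
    Submodule ℂ (MvPolynomial (Fin (N + 1)) ℂ) :=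
  Submodule.span ℂ {p | ∃ π, IsLSPath N b r π ∧ p = xpow N b π}

lemma intpsum (N : ℕ) (b : ℕ → ℕ) (hbN : b N = 1)
    (r : ℕ) (π : ℕ → ℚ) (h : IsLSPath N b r π) :
    ∀ j ≤ N, ∃ k : ℤ, (b j : ℚ) * (∑ i ∈ Finset.range (j + 1), π i) = k := by
  obtain ⟨_, _, hint, hsum⟩ := h
  intro j hj
  rcases lt_or_eq_of_le hj with hj | rfl
  · exact hint j hj
  · exact ⟨r, by rw [hsum, hbN]; push_cast; ring⟩

lemma exp_exact (N : ℕ) (b : ℕ → ℕ) (hbN : b N = 1)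
    (r : ℕ) (π : ℕ → ℚ) (h : IsLSPath N b r π) (i : ℕ) :
    ∃ k : ℕ, (Mf b i : ℚ) * π i = k := by
  have hint' := intpsum N b hbN r π h
  obtain ⟨hpos, hsupp, hint, hsum⟩ := h
  have main : ∃ k : ℤ, (Mf b i : ℚ) * π i = k := by
    rcases le_or_gt i N with hiN | hiN
    · rcases i with _ | j
      · obtain ⟨k, hk⟩ := hint' 0 (Nat.zero_le N)
        refine ⟨k, ?_⟩
        simpa [Mf, Finset.sum_range_one] using hk
      · obtain ⟨c, hc⟩ := Nat.dvd_lcm_left (b j) (b (j+1))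
        obtain ⟨d, hd⟩ := Nat.dvd_lcm_right (b j) (b (j+1))
        obtain ⟨k1, hk1⟩ := hint' j (le_trans (Nat.le_succ j) hiN)
        obtain ⟨k2, hk2⟩ := hint' (j+1) hiN
        refine ⟨d * k2 - c * k1, ?_⟩
        have hM : Mf b (j+1) = Nat.lcm (b j) (b (j+1)) := by simp [Mf]
        have e1 : (Mf b (j+1) : ℚ) = (b j : ℚ) * c := by rw [hM, hc]; push_cast; ring
        have e2 : (Mf b (j+1) : ℚ) = (b (j+1) : ℚ) * d := by rw [hM, hd]; push_cast; ring
        have hπ : π (j+1) = (∑ i ∈ Finset.range (j+1+1), π i) - (∑ i ∈ Finset.range (j+1), π i) := by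
          rw [Finset.sum_range_succ]; ring
        push_cast
        linear_combination (d:ℚ) * hk2 - (c:ℚ) * hk1 + (∑ i ∈ Finset.range (j+1+1), π i) * e2 - (∑ i ∈ Finset.range (j+1), π i) * e1 + (Mf b (j+1) : ℚ) * hπ
    · exact ⟨0, by rw [hsupp i hiN]; simp⟩
  obtain ⟨k, hk⟩ := main
  have hk0 : 0 ≤ k := by
    have : (0:ℚ) ≤ k := hk ▸ mul_nonneg (by positivity) (hpos i)
    exact_mod_cast this
  exact ⟨k.toNat, by rw [hk]; rw_mod_cast [Int.toNat_of_nonneg hk0]⟩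

lemma Mf_pos (N : ℕ) (hN : 1 ≤ N) (b : ℕ → ℕ) (hb : ∀ i < N, 0 < b i) (hbN : b N = 1)
    (i : ℕ) (hi : i ≤ N) : 0 < Mf b i := by
  have hbb : ∀ j ≤ N, 0 < b j := by
    intro j hj
    rcases lt_or_eq_of_le hj with hj | rfl
    · exact hb j hj
    · omega
  rcases i with _ | j
  · simpa [Mf] using Nat.lcm_pos one_pos (hbb 0 (Nat.zero_le N))
  · have : Mf b (j+1) = Nat.lcm (b j) (b (j+1)) := by simp [Mf]
    rw [this]
    exact Nat.lcm_pos (hbb j (by omega)) (hbb (j+1) hi)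

lemma lspath_add (N : ℕ) (b : ℕ → ℕ) (r r' : ℕ) (π π' : ℕ → ℚ)
    (h : IsLSPath N b r π) (h' : IsLSPath N b r' π') :
    IsLSPath N b (r + r') (π + π') := by
  obtain ⟨h1, h2, h3, h4⟩ := h
  obtain ⟨h1', h2', h3', h4'⟩ := h'
  refine ⟨fun i => add_nonneg (h1 i) (h1' i), fun i hi => by simp [h2 i hi, h2' i hi], ?_, ?_⟩
  · intro j hj
    obtain ⟨k, hk⟩ := h3 j hj
    obtain ⟨k', hk'⟩ := h3' j hj
    refine ⟨k + k', ?_⟩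
    push_cast
    simp only [Pi.add_apply, Finset.sum_add_distrib]
    linarith [hk, hk']
  · simp only [Pi.add_apply, Finset.sum_add_distrib, h4, h4']
    push_cast; ring

lemma xpow_add (N : ℕ) (b : ℕ → ℕ) (σ τ : ℕ → ℚ)
    (hσ : ∀ i, ∃ k : ℕ, (Mf b i : ℚ) * σ i = k)
    (hτ : ∀ i, ∃ k : ℕ, (Mf b i : ℚ) * τ i = k) :
    xpow N b (σ + τ) = xpow N b σ * xpow N b τ := by
  unfold xpow
  rw [MvPolynomial.monomial_mul, one_mul]
  have hd : (Finsupp.equivFunOnFinite.symm fun i : Fin (N + 1) => ⌊(Mf b i : ℚ) * (σ + τ) i⌋₊) =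
      (Finsupp.equivFunOnFinite.symm fun i : Fin (N + 1) => ⌊(Mf b i : ℚ) * σ i⌋₊) +
      (Finsupp.equivFunOnFinite.symm fun i : Fin (N + 1) => ⌊(Mf b i : ℚ) * τ i⌋₊) := by
    apply Finsupp.ext
    intro i
    obtain ⟨k, hk⟩ := hσ (i : ℕ)
    obtain ⟨k', hk'⟩ := hτ (i : ℕ)
    simp only [Finsupp.add_apply, Finsupp.coe_equivFunOnFinite_symm, Pi.add_apply]
    rw [mul_add, hk, hk', ← Nat.cast_add, Nat.floor_natCast, Nat.floor_natCast, Nat.floor_natCast]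
  rw [hd]

lemma lspath_decomp (N : ℕ) (b : ℕ → ℕ) (hb : ∀ i < N, 0 < b i)
    (r : ℕ) (π : ℕ → ℚ) (h : IsLSPath N b (r + 1) π) :
    ∃ σ τ, IsLSPath N b 1 σ ∧ IsLSPath N b r τ ∧ π = σ + τ := by
  obtain ⟨h1, h2, h3, h4⟩ := h
  set S : ℕ → ℚ := fun j => ∑ i ∈ Finset.range (j + 1), π i with hS
  have hSsucc : ∀ j, S (j + 1) = S j + π (j + 1) := fun j => Finset.sum_range_succ π (j + 1)
  have hSmono : ∀ j, S j ≤ S (j + 1) := fun j => by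
    rw [hSsucc]; linarith [h1 (j + 1)]
  set T : ℕ → ℚ := fun j => min (S j) 1 with hT
  have hTmono : ∀ j, T j ≤ T (j + 1) := fun j => min_le_min (hSmono j) le_rfl
  set σ : ℕ → ℚ := fun i => if i = 0 then T 0 else T i - T (i - 1) with hσ
  have hσsum : ∀ j, ∑ i ∈ Finset.range (j + 1), σ i = T j := by
    intro j
    induction j with
    | zero => simp [hσ]
    | succ n ih =>
      rw [Finset.sum_range_succ, ih]
      simp only [hσ, if_neg (Nat.succ_ne_zero n), Nat.add_sub_cancel]
      ring
  set τ : ℕ → ℚ := fun i => π i - σ i with hτ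
  have hτsum : ∀ j, ∑ i ∈ Finset.range (j + 1), τ i = S j - T j := by
    intro j
    simp only [hτ, Finset.sum_sub_distrib, hσsum j]
    rfl
  have hTint : ∀ j ≤ N, ∃ k : ℤ, (b j : ℚ) * T j = k ∧ (b j : ℚ) * S j = k ∨
      True := fun _ _ => ⟨0, Or.inr trivial⟩
  -- integrality of T
  have hTint' : ∀ j < N, ∃ k : ℤ, (b j : ℚ) * T j = k := by
    intro j hj
    obtain ⟨k, hk⟩ := h3 j hj
    refine ⟨min k (b j), ?_⟩
    have hbj : (0:ℚ) < (b j : ℚ) := by exact_mod_cast hb j hj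
    rcases le_total (S j) 1 with hle | hle
    · have : (k:ℚ) ≤ (b j : ℚ) := by
        rw [← hk]; nlinarith
      rw [hT]
      simp only [min_eq_left hle]
      rw [hk]
      have : min k ((b j : ℤ)) = k := min_eq_left (by exact_mod_cast this)
      rw [this]
    · have : ((b j : ℤ):ℚ) ≤ (k:ℚ) := by
        rw [← hk]; push_cast; nlinarith
      rw [hT]
      simp only [min_eq_right hle, mul_one]
      have : min k ((b j : ℤ)) = (b j : ℤ) := min_eq_right (by exact_mod_cast this)
      rw [this]; push_cast; ring
  have hσpath : IsLSPath N b 1 σ := by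
    refine ⟨?_, ?_, ?_, ?_⟩
    · intro i
      rcases i with _ | j
      · have hS0 : S 0 = π 0 := Finset.sum_range_one π
        simp only [hσ, if_pos rfl, hT, hS0]
        exact le_min (h1 0) one_pos.le
      · simp only [hσ, if_neg (Nat.succ_ne_zero j), Nat.add_sub_cancel]
        linarith [hTmono j]
    · intro i hi
      rcases i with _ | j
      · omega
      · simp only [hσ, if_neg (Nat.succ_ne_zero j), Nat.add_sub_cancel]
        have : S (j + 1) = S j := by rw [hSsucc, h2 (j+1) hi]; ring
        simp only [hT, this, sub_self]
    · intro j hj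
      rw [hσsum j]
      exact hTint' j hj
    · rw [hσsum N]
      have : S N = (r:ℚ) + 1 := by rw [hS]; push_cast at h4 ⊢; exact h4
      simp only [hT, this]
      rw [min_eq_right (by push_cast; linarith [Nat.cast_nonneg (α := ℚ) r])]
      norm_num
  have hτpath : IsLSPath N b r τ := by
    refine ⟨?_, ?_, ?_, ?_⟩
    · intro i
      rcases i with _ | j
      · have hS0 : S 0 = π 0 := Finset.sum_range_one π
        simp only [hτ, hσ, hT, hS0, eq_self_iff_true, if_true]
        have : min (π 0) 1 ≤ π 0 := min_le_left _ _
        linarith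
      · simp only [hτ, hσ, if_neg (Nat.succ_ne_zero j), Nat.add_sub_cancel]
        have hps : π (j+1) = S (j+1) - S j := by rw [hSsucc]; ring
        rw [hps]
        have h1' : S j ≤ S (j+1) := hSmono j
        simp only [hT]
        rcases le_total (S (j+1)) 1 with c1 | c1 <;> rcases le_total (S j) 1 with c2 | c2 <;>
          simp [min_eq_left, min_eq_right, c1, c2] <;> linarith
    · intro i hi
      simp only [hτ, h2 i hi]
      have : σ i = 0 := by
        rcases i with _ | j
        · omega
        · simp only [hσ, if_neg (Nat.succ_ne_zero j), Nat.add_sub_cancel]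
          have : S (j + 1) = S j := by rw [hSsucc, h2 (j+1) hi]; ring
          simp only [hT, this, sub_self]
      rw [this]; ring
    · intro j hj
      rw [hτsum j]
      obtain ⟨k, hk⟩ := h3 j hj
      obtain ⟨k', hk'⟩ := hTint' j hj
      exact ⟨k - k', by push_cast; rw [mul_sub, hk, hk']⟩
    · rw [hτsum N]
      have hSN : S N = (r:ℚ) + 1 := by rw [hS]; push_cast at h4 ⊢; exact h4
      have hTN : T N = 1 := by
        simp only [hT, hSN]
        exact min_eq_right (by linarith [Nat.cast_nonneg (α := ℚ) r])
      rw [hSN, hTN]; ring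
  exact ⟨σ, τ, hσpath, hτpath, by funext i; simp [hτ]⟩


lemma xpow_zero_path (N : ℕ) (b : ℕ → ℕ) (π : ℕ → ℚ) (h : IsLSPath N b 0 π) :
    xpow N b π = 1 := by
  obtain ⟨h1, h2, _, h4⟩ := h
  have hz : ∀ i : ℕ, π i = 0 := by
    intro i
    rcases le_or_gt i N with hi | hi
    · have := (Finset.sum_eq_zero_iff_of_nonneg (fun j _ => h1 j)).mp
        (by simpa using h4) i (Finset.mem_range.mpr (by omega))
      exact this
    · exact h2 i hi
  unfold xpow
  have : (Finsupp.equivFunOnFinite.symm fun i : Fin (N + 1) => ⌊(Mf b i : ℚ) * π i⌋₊) = 0 := by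
    apply Finsupp.ext
    intro i
    simp [hz (i : ℕ)]
  rw [this, MvPolynomial.monomial_zero', MvPolynomial.C_1]

lemma xpow_mem_adjoin (N : ℕ) (hN : 1 ≤ N) (b : ℕ → ℕ) (hb : ∀ i < N, 0 < b i)
    (hbN : b N = 1) :
    ∀ r (π : ℕ → ℚ), IsLSPath N b r π →
      xpow N b π ∈ Algebra.adjoin ℂ {p | ∃ π, IsLSPath N b 1 π ∧ p = xpow N b π} := by
  intro r
  induction r with
  | zero =>
    intro π h
    rw [xpow_zero_path N b π h]
    exact one_mem _
  | succ n ih =>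
    intro π h
    obtain ⟨σ, τ, hσ, hτ, rfl⟩ := lspath_decomp N b hb n π h
    rw [xpow_add N b σ τ (exp_exact N b hbN 1 σ hσ) (exp_exact N b hbN n τ hτ)]
    exact mul_mem (Algebra.subset_adjoin ⟨σ, hσ, rfl⟩) (ih τ hτ)

lemma adjoin_eq (N : ℕ) (hN : 1 ≤ N) (b : ℕ → ℕ) (hb : ∀ i < N, 0 < b i) (hbN : b N = 1) :
    Subalgebra.toSubmodule
      (Algebra.adjoin ℂ {p | ∃ π, IsLSPath N b 1 π ∧ p = xpow N b π}) = discreteLS N b := by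
  apply le_antisymm
  · -- adjoin ≤ discreteLS : build subalgebra structure on discreteLS
    have h1 : (1 : MvPolynomial (Fin (N + 1)) ℂ) ∈ discreteLS N b := by
      have hzero : IsLSPath N b 0 (fun _ => 0) := by
        refine ⟨fun _ => le_rfl, fun _ _ => rfl, fun j _ => ⟨0, by simp⟩, by simp⟩
      have : xpow N b (fun _ => 0) = 1 := xpow_zero_path N b _ hzero
      exact this ▸ Submodule.subset_span ⟨0, fun _ => 0, hzero, this.symm ▸ rfl⟩
    have hmul : ∀ x y : MvPolynomial (Fin (N + 1)) ℂ,
        x ∈ discreteLS N b → y ∈ discreteLS N b → x * y ∈ discreteLS N b := by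
      have key : discreteLS N b * discreteLS N b ≤ discreteLS N b := by
        rw [discreteLS, Submodule.span_mul_span]
        apply Submodule.span_le.mpr
        rintro p hp
        rw [Set.mem_mul] at hp
        obtain ⟨q, ⟨r, π, hπ, rfl⟩, q', ⟨r', π', hπ', rfl⟩, rfl⟩ := hp
        refine Submodule.subset_span ⟨r + r', π + π', lspath_add N b r r' π π' hπ hπ', ?_⟩
        exact (xpow_add N b π π' (exp_exact N b hbN r π hπ) (exp_exact N b hbN r' π' hπ')).symm
      intro x y hx hy
      exact key (Submodule.mul_mem_mul hx hy)
    let S₀ : Subalgebra ℂ (MvPolynomial (Fin (N + 1)) ℂ) :=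
      (discreteLS N b).toSubalgebra h1 hmul
    have hle : Algebra.adjoin ℂ {p | ∃ π, IsLSPath N b 1 π ∧ p = xpow N b π} ≤ S₀ :=
      Algebra.adjoin_le (fun p hp => by
        obtain ⟨π, hπ, rfl⟩ := hp
        exact Submodule.subset_span ⟨1, π, hπ, rfl⟩)
    intro x hx
    exact hle hx
  · apply Submodule.span_le.mpr
    rintro p ⟨r, π, hπ, rfl⟩
    exact xpow_mem_adjoin N hN b hb hbN r π hπ

lemma degree1_finite (N : ℕ) (hN : 1 ≤ N) (b : ℕ → ℕ) (hb : ∀ i < N, 0 < b i) (hbN : b N = 1) :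
    {π : ℕ → ℚ | IsLSPath N b 1 π}.Finite := by
  set Φ : (ℕ → ℚ) → (Fin (N + 1) → ℕ) :=
    fun π i => ⌊(Mf b (i : ℕ) : ℚ) * π (i : ℕ)⌋₊ with hΦ
  have hexact : ∀ π ∈ {π : ℕ → ℚ | IsLSPath N b 1 π}, ∀ i : Fin (N + 1),
      ((Φ π i : ℚ)) = (Mf b (i : ℕ) : ℚ) * π (i : ℕ) := by
    intro π hπ i
    obtain ⟨k, hk⟩ := exp_exact N b hbN 1 π hπ (i : ℕ)
    rw [hΦ]
    simp only
    rw [hk, Nat.floor_natCast]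
  have himg : Φ '' {π : ℕ → ℚ | IsLSPath N b 1 π} ⊆
      ↑(Fintype.piFinset fun i : Fin (N + 1) => Finset.range (Mf b (i : ℕ) + 1)) := by
    rintro f ⟨π, hπ, rfl⟩
    simp only [Finset.mem_coe, Fintype.mem_piFinset, Finset.mem_range]
    intro i
    have hb1 : π (i : ℕ) ≤ 1 := by
      obtain ⟨h1, h2, h3, h4⟩ := hπ
      calc π (i : ℕ) ≤ ∑ j ∈ Finset.range (N + 1), π j :=
            Finset.single_le_sum (fun j _ => h1 j) (Finset.mem_range.mpr i.2)
        _ = 1 := by rw [h4]; norm_num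
    have := hexact π hπ i
    have hkM : ((Φ π i : ℚ)) ≤ (Mf b (i : ℕ) : ℚ) := by
      rw [this]
      nlinarith [Nat.cast_nonneg (α := ℚ) (Mf b (i : ℕ))]
    have : Φ π i ≤ Mf b (i : ℕ) := by exact_mod_cast hkM
    omega
  have hinj : Set.InjOn Φ {π : ℕ → ℚ | IsLSPath N b 1 π} := by
    intro π hπ π' hπ' hΦeq
    funext i
    rcases le_or_gt i N with hi | hi
    · have hiF : i < N + 1 := by omega
      have e1 := hexact π hπ ⟨i, hiF⟩
      have e2 := hexact π' hπ' ⟨i, hiF⟩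
      rw [hΦeq] at e1
      have hMpos : (0:ℚ) < (Mf b i : ℚ) := by exact_mod_cast Mf_pos N hN b hb hbN i hi
      have : (Mf b i : ℚ) * π i = (Mf b i : ℚ) * π' i := by
        rw [← e1, ← e2]
      exact mul_left_cancel₀ (ne_of_gt hMpos) this
    · rw [hπ.2.1 i hi, hπ'.2.1 i hi]
  exact Set.Finite.of_finite_image
    (Set.Finite.subset (Finset.finite_toSet _) himg) hinj


/-- The set of LS-paths of degree 1 is finite, and the discrete LS algebra `A` is
generated as a `ℂ`-algebra by the finitely many monomials `x^π` with `π` of degree 1;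
in particular `A` is a finitely generated `ℂ`-algebra. -/
theorem stmt5 (N : ℕ) (hN : 1 ≤ N) (b : ℕ → ℕ) (hb : ∀ i < N, 0 < b i) (hbN : b N = 1) :
    {π : ℕ → ℚ | IsLSPath N b 1 π}.Finite ∧
    {p | ∃ π, IsLSPath N b 1 π ∧ p = xpow N b π}.Finite ∧
    Subalgebra.toSubmodule
      (Algebra.adjoin ℂ {p | ∃ π, IsLSPath N b 1 π ∧ p = xpow N b π}) = discreteLS N b ∧
    (∃ S : Subalgebra ℂ (MvPolynomial (Fin (N + 1)) ℂ),
      Subalgebra.toSubmodule S = discreteLS N b ∧ S.FG) := by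
  have hfin := degree1_finite N hN b hb hbN
  have hGeq : {p | ∃ π, IsLSPath N b 1 π ∧ p = xpow N b π} =
      xpow N b '' {π : ℕ → ℚ | IsLSPath N b 1 π} := by
    ext p
    constructor
    · rintro ⟨π, hπ, rfl⟩; exact ⟨π, hπ, rfl⟩
    · rintro ⟨π, hπ, rfl⟩; exact ⟨π, hπ, rfl⟩
  have hGfin : {p | ∃ π, IsLSPath N b 1 π ∧ p = xpow N b π}.Finite := by
    rw [hGeq]; exact hfin.image _
  have hadj := adjoin_eq N hN b hb hbN
  exact ⟨hfin, hGfin, hadj,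
    ⟨Algebra.adjoin ℂ {p | ∃ π, IsLSPath N b 1 π ∧ p = xpow N b π}, hadj,
      Subalgebra.fg_def.mpr ⟨_, hGfin, rfl⟩⟩⟩
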